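/- arXiv:2102.04443 — 4 statements merged into one kernel-verified Lean document; each statement's English description precedes it below -/
import Mathlib

section
/- Let p be a prime and G a finite p-solvable group with O_{p'}(G) = 1 that contains an element of order p and in which all non-trivial p-elements are conjugate. Then P := O_p(G) is non-trivial, P is a Sylow p-subgroup of G, P is elementary abelian, and C_G(P) = P; consequently the conjugation action of G/P on P is faithful and is transitive on P ∖ {1}. -/
/-- A `p`-element of a group: an element whose order is a power of `p`. -/
def IsPElement (p : ℕ) {G : Type*} [Group G] (g : G) : Prop :=
  ∃ k : ℕ, orderOf g = p ^ k

/-- A finite group is `p`-solvable iff it has a subnormal series each of whose factors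
is either a `p`-group or a group of order coprime to `p`; equivalently, every
composition factor is a `p`-group or a `p'`-group. -/
def IsPSolvable (p : ℕ) (G : Type*) [Group G] : Prop :=
  ∃ (n : ℕ) (H : Fin (n + 1) → Subgroup G), H 0 = ⊥ ∧ H (Fin.last n) = ⊤ ∧
    ∀ i : Fin n, H i.castSucc ≤ H i.succ ∧
      ((H i.castSucc).subgroupOf (H i.succ)).Normal ∧
      ((∃ m : ℕ, (H i.castSucc).relIndex (H i.succ) = p ^ m) ∨
        ¬ p ∣ (H i.castSucc).relIndex (H i.succ))

/-- `O_p(G)`: the largest normal `p`-subgroup of a (finite) group `G`. -/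
def pCore (p : ℕ) (G : Type*) [Group G] : Subgroup G :=
  sSup {H : Subgroup G | H.Normal ∧ IsPGroup p H}

/-- `O_{p'}(G)`: the largest normal subgroup of a (finite) group `G` of order coprime
to `p`. -/
def pPrimeCore (p : ℕ) (G : Type*) [Group G] : Subgroup G :=
  sSup {H : Subgroup G | H.Normal ∧ ¬ p ∣ Nat.card H}

open Subgroup

section Helpers

variable {p : ℕ} {X : Type*} [Group X]

lemma card_map_of_injective {Y : Type*} [Group Y] (f : X →* Y)
    (hf : Function.Injective f) (H : Subgroup X) : Nat.card (H.map f) = Nat.card H :=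
  Nat.card_congr (Subgroup.equivMapOfInjective H f hf).toEquiv.symm

lemma card_sup_dvd [Finite X] (A B : Subgroup X) [hB : B.Normal] :
    Nat.card ↥(A ⊔ B) ∣ Nat.card A * Nat.card B := by
  have h1 : Nat.card (B.subgroupOf (A ⊔ B)) * (B.subgroupOf (A ⊔ B)).index
      = Nat.card ↥(A ⊔ B) := Subgroup.card_mul_index _
  have h2 : Nat.card (B.subgroupOf (A ⊔ B)) = Nat.card B :=
    Nat.card_congr (Subgroup.subgroupOfEquivOfLe le_sup_right).toEquiv
  have h3 : (B.subgroupOf (A ⊔ B)).index = B.relIndex A := Subgroup.relIndex_sup_right A B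
  have h4 : B.relIndex A ∣ Nat.card A := Subgroup.index_dvd_card _
  rw [← h1, h2, h3, mul_comm (Nat.card A)]
  exact mul_dvd_mul_left _ h4

lemma sSup_normal_isPGroup [Finite X] :
    ∀ (S : Set (Subgroup X)), (∀ H ∈ S, H.Normal ∧ IsPGroup p H) →
      (sSup S).Normal ∧ IsPGroup p ↥(sSup S) := by
  intro S
  refine Set.Finite.induction_on
    (motive := fun (S : Set (Subgroup X)) _ => (∀ H ∈ S, H.Normal ∧ IsPGroup p H) →
      (sSup S).Normal ∧ IsPGroup p ↥(sSup S)) S (Set.toFinite S) ?_ ?_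
  · intro _
    rw [sSup_empty]
    exact ⟨inferInstance, IsPGroup.of_bot⟩
  · intro a s _ _ ih hins
    obtain ⟨h1, h2⟩ := hins a (Set.mem_insert a s)
    obtain ⟨ih1, ih2⟩ := ih fun H hH => hins H (Set.mem_insert_of_mem a hH)
    rw [sSup_insert]
    haveI := h1; haveI := ih1
    exact ⟨Subgroup.sup_normal a (sSup s), IsPGroup.to_sup_of_normal_right h2 ih2⟩

lemma sSup_normal_notdvd [Finite X] (hp : p.Prime) :
    ∀ (S : Set (Subgroup X)), (∀ H ∈ S, H.Normal ∧ ¬ p ∣ Nat.card H) →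
      (sSup S).Normal ∧ ¬ p ∣ Nat.card ↥(sSup S) := by
  intro S
  refine Set.Finite.induction_on
    (motive := fun (S : Set (Subgroup X)) _ => (∀ H ∈ S, H.Normal ∧ ¬ p ∣ Nat.card H) →
      (sSup S).Normal ∧ ¬ p ∣ Nat.card ↥(sSup S)) S (Set.toFinite S) ?_ ?_
  · intro _
    rw [sSup_empty]
    refine ⟨inferInstance, ?_⟩
    rw [Subgroup.card_bot]
    exact fun h => hp.ne_one (Nat.dvd_one.mp h)
  · intro a s _ _ ih hins
    obtain ⟨h1, h2⟩ := hins a (Set.mem_insert a s)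
    obtain ⟨ih1, ih2⟩ := ih fun H hH => hins H (Set.mem_insert_of_mem a hH)
    rw [sSup_insert]
    haveI := h1; haveI := ih1
    refine ⟨Subgroup.sup_normal a (sSup s), fun hdvd => ?_⟩
    rcases hp.dvd_mul.mp (hdvd.trans (card_sup_dvd a (sSup s))) with h | h
    · exact h2 h
    · exact ih2 h

lemma pCore_normal [Finite X] : (pCore p X).Normal :=
  (sSup_normal_isPGroup _ (fun _ hH => hH)).1

lemma pCore_isPGroup [Finite X] : IsPGroup p ↥(pCore p X) :=
  (sSup_normal_isPGroup _ (fun _ hH => hH)).2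

lemma pPrimeCore_normal [Finite X] (hp : p.Prime) : (pPrimeCore p X).Normal :=
  (sSup_normal_notdvd hp _ (fun _ hH => hH)).1

lemma pPrimeCore_notdvd [Finite X] (hp : p.Prime) : ¬ p ∣ Nat.card ↥(pPrimeCore p X) :=
  (sSup_normal_notdvd hp _ (fun _ hH => hH)).2

lemma map_pCore_le (e : X ≃* X) :
    (pCore p X).map e.toMonoidHom ≤ pCore p X := by
  rw [pCore, (Subgroup.gc_map_comap e.toMonoidHom).l_sSup]
  exact iSup₂_le fun H hH => le_sSup ⟨hH.1.map _ e.surjective, hH.2.map _⟩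

lemma map_pPrimeCore_le (e : X ≃* X) :
    (pPrimeCore p X).map e.toMonoidHom ≤ pPrimeCore p X := by
  rw [pPrimeCore, (Subgroup.gc_map_comap e.toMonoidHom).l_sSup]
  refine iSup₂_le fun H hH => le_sSup ⟨hH.1.map _ e.surjective, ?_⟩
  rw [card_map_of_injective e.toMonoidHom e.injective]
  exact hH.2

end Helpers



lemma exists_normal_special {p : ℕ} (hp : p.Prime) (G : Type*) [Group G] [Finite G]
    (hsolv : IsPSolvable p G) (hG : (⊤ : Subgroup G) ≠ ⊥) :
    ∃ K : Subgroup G, K ≠ ⊥ ∧ K.Normal ∧ (IsPGroup p ↥K ∨ ¬ p ∣ Nat.card ↥K) := by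
  obtain ⟨n, H, h0, hlast, hstep⟩ := hsolv
  have main : ∀ m : ℕ, ∀ hm : m < n + 1, H ⟨m, hm⟩ ≠ ⊥ →
      ∃ K : Subgroup G, K ≠ ⊥ ∧ K ≤ H ⟨m, hm⟩ ∧
        (∀ g ∈ H ⟨m, hm⟩, ∀ x ∈ K, g * x * g⁻¹ ∈ K) ∧
        (IsPGroup p ↥K ∨ ¬ p ∣ Nat.card ↥K) := by
    intro m
    induction m with
    | zero =>
      intro hm hne
      exact absurd (by simpa using h0) hne
    | succ j ih =>
      intro hm hne
      have hj : j < n + 1 := by omega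
      have hjn : j < n := by omega
      have hstepi := hstep ⟨j, hjn⟩
      have hcast : (⟨j, hjn⟩ : Fin n).castSucc = ⟨j, hj⟩ := rfl
      have hsucc : (⟨j, hjn⟩ : Fin n).succ = ⟨j + 1, hm⟩ := rfl
      rw [hcast, hsucc] at hstepi
      obtain ⟨hle, hnormal, htype⟩ := hstepi
      by_cases hMbot : H ⟨j, hj⟩ = ⊥
      · refine ⟨H ⟨j + 1, hm⟩, hne, le_rfl,
          fun g hg x hx => mul_mem (mul_mem hg hx) (inv_mem hg), ?_⟩
        rw [hMbot, Subgroup.relIndex_bot_left] at htype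
        exact htype.imp (fun h => h.elim fun m' hm' => IsPGroup.of_card hm') id
      · obtain ⟨K, hKne, hKle, hKnorm, hKtype⟩ := ih hj hMbot
        set M := H ⟨j, hj⟩ with hM
        set M' := H ⟨j + 1, hm⟩ with hM'
        have hMnorm : ∀ g ∈ M', ∀ x ∈ M, g * x * g⁻¹ ∈ M := by
          intro g hg x hx
          have h1 : (⟨x, hle hx⟩ : ↥M') ∈ M.subgroupOf M' := by
            rwa [Subgroup.mem_subgroupOf]
          have h2 := hnormal.conj_mem _ h1 ⟨g, hg⟩
          rwa [Subgroup.mem_subgroupOf] at h2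
        have conjequiv : ∀ g ∈ M', ∃ e : ↥M ≃* ↥M, ∀ x : ↥M, (e x : G) = g * x * g⁻¹ := by
          intro g hg
          refine ⟨{ toFun := fun x => ⟨g * x * g⁻¹, hMnorm g hg x x.2⟩,
                    invFun := fun x => ⟨g⁻¹ * x * g, by
                      simpa using hMnorm g⁻¹ (inv_mem hg) x x.2⟩,
                    left_inv := fun x => by ext; simp; group,
                    right_inv := fun x => by ext; simp; group,
                    map_mul' := fun x y => by ext; simp [mul_assoc] }, fun x => rfl⟩
        have hKsub_normal : (K.subgroupOf M).Normal := by
          constructor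
          rintro ⟨x, hxM⟩ hx g
          rw [Subgroup.mem_subgroupOf] at hx ⊢
          exact hKnorm g g.2 x hx
        rcases hKtype with hKp | hKp'
        · -- p-group case
          refine ⟨(pCore p ↥M).map M.subtype, ?_, (Subgroup.map_subtype_le _).trans hle, ?_, ?_⟩
          · have h1 : K.subgroupOf M ≤ pCore p ↥M :=
              le_sSup ⟨hKsub_normal, hKp.of_equiv (Subgroup.subgroupOfEquivOfLe hKle).symm⟩
            have h2 : K ≤ (pCore p ↥M).map M.subtype := by
              have := Subgroup.map_mono (f := M.subtype) h1
              rwa [Subgroup.subgroupOf_map_subtype, inf_eq_left.mpr hKle] at this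
            exact fun h => hKne (le_bot_iff.mp (h ▸ h2))
          · rintro g hg x ⟨y, hy, rfl⟩
            obtain ⟨e, he⟩ := conjequiv g hg
            refine ⟨e y, map_pCore_le e ⟨y, hy, rfl⟩, by simpa using he y⟩
          · exact Or.inl (pCore_isPGroup.map _)
        · -- p'-group case
          refine ⟨(pPrimeCore p ↥M).map M.subtype, ?_, (Subgroup.map_subtype_le _).trans hle, ?_, ?_⟩
          · have h1 : K.subgroupOf M ≤ pPrimeCore p ↥M := by
              refine le_sSup ⟨hKsub_normal, ?_⟩
              rwa [Nat.card_congr (Subgroup.subgroupOfEquivOfLe hKle).toEquiv]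
            have h2 : K ≤ (pPrimeCore p ↥M).map M.subtype := by
              have := Subgroup.map_mono (f := M.subtype) h1
              rwa [Subgroup.subgroupOf_map_subtype, inf_eq_left.mpr hKle] at this
            exact fun h => hKne (le_bot_iff.mp (h ▸ h2))
          · rintro g hg x ⟨y, hy, rfl⟩
            obtain ⟨e, he⟩ := conjequiv g hg
            refine ⟨e y, map_pPrimeCore_le e ⟨y, hy, rfl⟩, by simpa using he y⟩
          · refine Or.inr ?_
            rw [card_map_of_injective M.subtype M.subtype_injective]
            exact pPrimeCore_notdvd hp
  have hn : n < n + 1 := by omega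
  have htop : H ⟨n, hn⟩ = ⊤ := by rw [← hlast]; rfl
  obtain ⟨K, hKne, hKle, hKnorm, hKtype⟩ := main n hn (by rw [htop]; exact hG)
  exact ⟨K, hKne, ⟨fun x hx g => hKnorm g (by rw [htop]; trivial) x hx⟩, hKtype⟩

/-- Let `G` be a finite `p`-solvable group with `O_{p'}(G) = 1` containing an element
of order `p` in which all non-trivial `p`-elements are conjugate.  Then
`P := O_p(G)` is non-trivial, `P` is a Sylow `p`-subgroup of `G`, `P` is elementary
abelian, `C_G(P) = P`; consequently the conjugation action of `G/P` on `P` is faithful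
(only elements of `P` act trivially on `P`) and transitive on `P ∖ {1}`. -/
theorem pCore_elementary_abelian_sylow_of_two_classes
    (p : ℕ) (hp : p.Prime) (G : Type*) [Group G] [Finite G]
    (hsolv : IsPSolvable p G)
    (hop' : pPrimeCore p G = ⊥)
    (hex : ∃ g : G, orderOf g = p)
    (hconj : ∀ x y : G, IsPElement p x → IsPElement p y → x ≠ 1 → y ≠ 1 → IsConj x y) :
    pCore p G ≠ ⊥ ∧
    (∃ Q : Sylow p G, (Q : Subgroup G) = pCore p G) ∧
    (∀ g ∈ pCore p G, g ^ p = 1) ∧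
    (∀ a ∈ pCore p G, ∀ b ∈ pCore p G, a * b = b * a) ∧
    Subgroup.centralizer ((pCore p G : Subgroup G) : Set G) = pCore p G ∧
    (∀ g : G, (∀ n ∈ pCore p G, g * n * g⁻¹ = n) → g ∈ pCore p G) ∧
    (∀ x ∈ pCore p G, ∀ y ∈ pCore p G, x ≠ 1 → y ≠ 1 → ∃ g : G, g * x * g⁻¹ = y) := by
  haveI : Fact p.Prime := ⟨hp⟩
  obtain ⟨g0, hg0⟩ := hex
  have hg0ne : g0 ≠ 1 := by
    intro h; rw [h, orderOf_one] at hg0; exact hp.ne_one hg0.symm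
  have hg0pel : IsPElement p g0 := ⟨1, by rw [pow_one]; exact hg0⟩
  have htopbot : (⊤ : Subgroup G) ≠ ⊥ := by
    intro h
    have : g0 ∈ (⊥ : Subgroup G) := h ▸ Subgroup.mem_top g0
    exact hg0ne (Subgroup.mem_bot.mp this)
  have hPnormal : (pCore p G).Normal := pCore_normal
  have hPp : IsPGroup p ↥(pCore p G) := pCore_isPGroup
  -- non-triviality of the p-core
  have hPne : pCore p G ≠ ⊥ := by
    obtain ⟨K, hKne, hKnormal, hKtype⟩ := exists_normal_special hp G hsolv htopbot
    rcases hKtype with h | h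
    · have hle : K ≤ pCore p G := le_sSup ⟨hKnormal, h⟩
      exact fun hbot => hKne (le_bot_iff.mp (hbot ▸ hle))
    · have hle : K ≤ pPrimeCore p G := le_sSup ⟨hKnormal, h⟩
      rw [hop'] at hle
      exact absurd (le_bot_iff.mp hle) hKne
  -- p-elements
  have pelem_of : ∀ (Hs : Subgroup G), IsPGroup p ↥Hs → ∀ x ∈ Hs, IsPElement p x := by
    intro Hs hHs x hx
    obtain ⟨k, hk⟩ := hHs ⟨x, hx⟩
    have hk' : x ^ p ^ k = 1 := by
      simpa using congrArg (fun y : ↥Hs => (y : G)) hk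
    obtain ⟨j, _, hj⟩ := (Nat.dvd_prime_pow hp).mp (orderOf_dvd_of_pow_eq_one hk')
    exact ⟨j, hj⟩
  have hPelem : ∀ x ∈ pCore p G, IsPElement p x := pelem_of _ hPp
  have horderp : ∀ x : G, IsPElement p x → x ≠ 1 → orderOf x = p := by
    intro x hx hxne
    obtain ⟨c, hc⟩ := isConj_iff.mp (hconj x g0 hx hg0pel hxne hg0ne)
    have hoc : orderOf (c * x * c⁻¹) = orderOf x := by
      have h := orderOf_injective (MulAut.conj c).toMonoidHom (MulEquiv.injective _) x
      simpa [MulAut.conj_apply] using h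
    rw [← hg0, ← hc, hoc]
  obtain ⟨z, hz⟩ := Subgroup.ne_bot_iff_exists_ne_one.mp hPne
  have hzne : (z : G) ≠ 1 := fun h => hz (Subtype.ext h)
  have hallp : ∀ x : G, IsPElement p x → x ∈ pCore p G := by
    intro x hx
    by_cases hx1 : x = 1
    · rw [hx1]; exact one_mem _
    · obtain ⟨c, hc⟩ := isConj_iff.mp (hconj z x (hPelem z z.2) hx hzne hx1)
      exact hc ▸ hPnormal.conj_mem z z.2 c
  -- Sylow
  obtain ⟨Q⟩ := (inferInstance : Nonempty (Sylow p G))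
  have hQle : (Q : Subgroup G) ≤ pCore p G := fun x hxQ => hallp x (pelem_of _ Q.2 x hxQ)
  have hPQ : pCore p G = (Q : Subgroup G) := Q.3 hPp hQle
  -- exponent p
  have hexp : ∀ g ∈ pCore p G, g ^ p = 1 := by
    intro g hg
    by_cases h1 : g = 1
    · simp [h1]
    · rw [← horderp g (hPelem g hg) h1]; exact pow_orderOf_eq_one g
  -- abelian
  haveI : Nontrivial ↥(pCore p G) := ⟨⟨z, 1, hz⟩⟩
  haveI := IsPGroup.center_nontrivial hPp
  obtain ⟨z0, hz0ne⟩ := exists_ne (1 : Subgroup.center ↥(pCore p G))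
  have hwmem : ((z0 : ↥(pCore p G)) : G) ∈ pCore p G := (z0 : ↥(pCore p G)).2
  have hwne : ((z0 : ↥(pCore p G)) : G) ≠ 1 :=
    fun h => hz0ne (Subtype.ext (Subtype.ext h))
  have hcomm : ∀ a ∈ pCore p G, ∀ b ∈ pCore p G, a * b = b * a := by
    intro a ha b hb
    by_cases ha1 : a = 1
    · rw [ha1, one_mul, mul_one]
    · obtain ⟨c, hc⟩ := isConj_iff.mp
        (hconj ((z0 : ↥(pCore p G)) : G) a (hPelem _ hwmem) (hPelem a ha) hwne ha1)
      have hd : c⁻¹ * b * c ∈ pCore p G := by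
        simpa using hPnormal.conj_mem b hb c⁻¹
      have hcm : ((z0 : ↥(pCore p G)) : G) * (c⁻¹ * b * c)
          = (c⁻¹ * b * c) * ((z0 : ↥(pCore p G)) : G) := by
        have h := Subgroup.mem_center_iff.mp z0.2 ⟨c⁻¹ * b * c, hd⟩
        exact (congrArg (fun y : ↥(pCore p G) => (y : G)) h).symm
      have e1 : a * b = c * (((z0 : ↥(pCore p G)) : G) * (c⁻¹ * b * c)) * c⁻¹ := by
        rw [← hc]; group
      have e2 : b * a = c * ((c⁻¹ * b * c) * ((z0 : ↥(pCore p G)) : G)) * c⁻¹ := by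
        rw [← hc]; group
      rw [e1, hcm, ← e2]
  -- centralizer
  have hPC : pCore p G ≤ Subgroup.centralizer ((pCore p G : Subgroup G) : Set G) := by
    intro a ha
    rw [Subgroup.mem_centralizer_iff]
    intro b hb
    exact hcomm b hb a ha
  set C := Subgroup.centralizer ((pCore p G : Subgroup G) : Set G) with hCdef
  have hCmem : ∀ c ∈ C, ∀ x ∈ pCore p G, x * c = c * x :=
    fun c hc => Subgroup.mem_centralizer_iff.mp hc
  haveI hCnormal : C.Normal := by
    constructor
    intro c hc g
    rw [hCdef, Subgroup.mem_centralizer_iff]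
    intro b hb
    have hb' : g⁻¹ * b * g ∈ pCore p G := by simpa using hPnormal.conj_mem b hb g⁻¹
    have h1 := hCmem c hc _ hb'
    calc b * (g * c * g⁻¹) = g * ((g⁻¹ * b * g) * c) * g⁻¹ := by group
      _ = g * (c * (g⁻¹ * b * g)) * g⁻¹ := by rw [h1]
      _ = (g * c * g⁻¹) * b := by group
  haveI hP'norm : ((pCore p G).subgroupOf C).Normal := by
    constructor
    rintro ⟨x, hxC⟩ hx g
    rw [Subgroup.mem_subgroupOf] at hx ⊢
    have hcm := hCmem (↑g) g.2 x hx
    have hfix : ((g : G)) * x * (g : G)⁻¹ = x := by rw [← hcm]; group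
    simpa [hfix] using hx
  obtain ⟨n0, hn0⟩ := IsPGroup.iff_card.mp hPp
  have hcardP' : Nat.card ↥((pCore p G).subgroupOf C) = p ^ n0 := by
    rw [Nat.card_congr (Subgroup.subgroupOfEquivOfLe hPC).toEquiv, hn0]
  have hindex : ¬ p ∣ ((pCore p G).subgroupOf C).index := by
    intro hdvd
    have h2 : (pCore p G).relIndex C ∣ (pCore p G).index :=
      Subgroup.relIndex_dvd_index_of_le hPC
    have h3 : ¬ p ∣ (pCore p G).index := by
      rw [hPQ]
      exact Q.not_dvd_index
    exact h3 (hdvd.trans h2)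
  have hcop : Nat.Coprime (Nat.card ↥((pCore p G).subgroupOf C))
      ((pCore p G).subgroupOf C).index := by
    rw [hcardP']
    exact Nat.Coprime.pow_left _ ((hp.coprime_iff_not_dvd).mpr hindex)
  obtain ⟨K', hK'⟩ := Subgroup.exists_right_complement'_of_coprime hcop
  have hK'card : ¬ p ∣ Nat.card ↥K' := by
    have h := hK'.symm.index_eq_card
    rw [← h]
    exact hindex
  have hmemK' : ∀ c : ↥C, ¬ p ∣ orderOf (c : G) → c ∈ K' := by
    intro c hc
    obtain ⟨⟨x, y⟩, hxy, -⟩ := hK'.existsUnique c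
    have hxP : (((x : ↥C)) : G) ∈ pCore p G := x.2
    have hxyc : Commute (x : ↥C) (y : ↥C) := by
      have h := hCmem ((y : ↥C) : G) (y : ↥C).2 ((x : ↥C) : G) hxP
      exact Subtype.ext h
    have hcn : c ^ orderOf c = 1 := pow_orderOf_eq_one c
    have hxyn : (x : ↥C) ^ orderOf c * (y : ↥C) ^ orderOf c = 1 := by
      rw [← Commute.mul_pow hxyc, hxy, hcn]
    have hx_n_mem : (x : ↥C) ^ orderOf c ∈ (pCore p G).subgroupOf C :=
      pow_mem x.2 (orderOf c)
    have hy_n_mem : (x : ↥C) ^ orderOf c ∈ K' := by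
      have he : (x : ↥C) ^ orderOf c = ((y : ↥C) ^ orderOf c)⁻¹ := by
        rw [eq_inv_iff_mul_eq_one]; exact hxyn
      rw [he]
      exact inv_mem (pow_mem y.2 (orderOf c))
    have hx1 : (x : ↥C) ^ orderOf c = 1 :=
      Subgroup.disjoint_def.mp hK'.disjoint hx_n_mem hy_n_mem
    have hordc : orderOf (c : G) = orderOf c :=
      orderOf_injective C.subtype Subtype.coe_injective c
    have hpnn : ¬ p ∣ orderOf c := by rwa [hordc] at hc
    obtain ⟨k, hk⟩ := hPp ⟨((x : ↥C) : G), hxP⟩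
    have hk' : ((x : ↥C) : G) ^ p ^ k = 1 := by
      simpa using congrArg (fun y : ↥(pCore p G) => (y : G)) hk
    have hxo1 : orderOf ((x : ↥C)) ∣ p ^ k :=
      orderOf_dvd_of_pow_eq_one (Subtype.ext (by simpa using hk'))
    have hxo2 : orderOf ((x : ↥C)) ∣ orderOf c := orderOf_dvd_of_pow_eq_one hx1
    obtain ⟨j, hjk, hj⟩ := (Nat.dvd_prime_pow hp).mp hxo1
    have hj0 : j = 0 := by
      by_contra hne0
      exact hpnn ((dvd_pow_self p hne0).trans (hj ▸ hxo2))
    have hxone : (x : ↥C) = 1 := orderOf_eq_one_iff.mp (by rw [hj, hj0, pow_zero])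
    rw [← hxy, hxone, one_mul]
    exact y.2
  set K := K'.map C.subtype with hKdef
  have hKcard : ¬ p ∣ Nat.card ↥K := by
    rw [hKdef, card_map_of_injective C.subtype Subtype.coe_injective]
    exact hK'card
  haveI hKnormal : K.Normal := by
    constructor
    intro k hk g
    have hkC : k ∈ C := Subgroup.map_subtype_le K' hk
    have hgC : g * k * g⁻¹ ∈ C := hCnormal.conj_mem k hkC g
    have hordk : ¬ p ∣ orderOf k := by
      intro hdvd
      obtain ⟨y, hy, rfl⟩ := hk
      have h1 : orderOf (C.subtype y) = orderOf y :=
        orderOf_injective C.subtype Subtype.coe_injective y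
      have h2 : orderOf y ∣ Nat.card ↥K' := by
        have h3 := orderOf_dvd_natCard (⟨y, hy⟩ : ↥K')
        have h4 : orderOf (K'.subtype ⟨y, hy⟩) = orderOf (⟨y, hy⟩ : ↥K') :=
          orderOf_injective K'.subtype Subtype.coe_injective ⟨y, hy⟩
        rw [← h4] at h3
        exact h3
      exact hK'card (hdvd.trans (h1 ▸ h2))
    have hord2 : ¬ p ∣ orderOf (g * k * g⁻¹) := by
      have h : orderOf (g * k * g⁻¹) = orderOf k := by
        have hh := orderOf_injective (MulAut.conj g).toMonoidHom (MulEquiv.injective _) k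
        simpa [MulAut.conj_apply] using hh
      rwa [h]
    have hmem := hmemK' ⟨g * k * g⁻¹, hgC⟩ hord2
    exact ⟨⟨g * k * g⁻¹, hgC⟩, hmem, rfl⟩
  have hKle : K ≤ pPrimeCore p G := le_sSup ⟨hKnormal, hKcard⟩
  rw [hop'] at hKle
  have hK'bot : K' = ⊥ :=
    (Subgroup.map_eq_bot_iff_of_injective K' (f := C.subtype)
      Subtype.coe_injective).mp (le_bot_iff.mp hKle)
  have hP'top : (pCore p G).subgroupOf C = ⊤ :=
    Subgroup.isComplement'_bot_right.mp (hK'bot ▸ hK')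
  have hCP : C ≤ pCore p G := Subgroup.subgroupOf_eq_top.mp hP'top
  have hCeq : C = pCore p G := le_antisymm hCP hPC
  refine ⟨hPne, ⟨Q, hPQ.symm⟩, hexp, hcomm, hCeq, ?_, ?_⟩
  · intro g hg
    apply hCP
    rw [hCdef, Subgroup.mem_centralizer_iff]
    intro b hb
    have := hg b hb
    calc b * g = (g * b * g⁻¹) * g := by rw [this]
      _ = g * b := by group
  · intro x hx y hy hx1 hy1
    exact isConj_iff.mp (hconj x y (hPelem x hx) (hPelem y hy) hx1 hy1)
end

section
/- Let p be a prime, T a non-abelian finite simple group whose order is divisible by p, n ≥ 2 an integer, and G a finite group having a normal subgroup N isomorphic to the direct product of n copies of T. Then G has at least two conjugacy classes of non-trivial p-elements (i.e. k_p(G) ≥ 3). -/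
section Aux
variable {G : Type*} [Group G]

lemma orderOf_eq_of_isConj' {x y : G} (h : IsConj x y) : orderOf x = orderOf y := by
  rw [isConj_iff] at h
  obtain ⟨c, hc⟩ := h
  rw [← hc]
  exact (orderOf_injective (MulAut.conj c).toMonoidHom (MulAut.conj c).injective x).symm

lemma commute_coe_iff' (N : Subgroup G) (u v : N) :
    Commute (↑u : G) ↑v ↔ Commute u v :=
  ⟨fun h => Subtype.ext h, fun h => congrArg Subtype.val h⟩

/-- conjugation invariance of the commuting-count in a normal subgroup -/
lemma card_commute_conj_eq' (N : Subgroup G) (hN : N.Normal) {a b g : G}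
    (hg : g * a = b * g) :
    Nat.card {m : N // Commute (↑m : G) a} = Nat.card {m : N // Commute (↑m : G) b} := by
  have hb : g * a * g⁻¹ = b := by rw [mul_inv_eq_iff_eq_mul]; exact hg
  have key1 : ∀ m : G, Commute m a → Commute (g * m * g⁻¹) b := by
    intro m hm
    have := hm.map (MulAut.conj g).toMonoidHom
    simpa [MulAut.conj_apply, hb] using this
  have key2 : ∀ m : G, Commute m b → Commute (g⁻¹ * m * g) a := by
    intro m hm
    have := hm.map (MulAut.conj g⁻¹).toMonoidHom
    have ha : g⁻¹ * b * g = a := by rw [← hb]; group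
    simpa [MulAut.conj_apply, ha] using this
  refine Nat.card_congr ⟨fun m => ⟨⟨g * ↑m.1 * g⁻¹, hN.conj_mem _ m.1.2 g⟩, key1 _ m.2⟩,
    fun m => ⟨⟨g⁻¹ * ↑m.1 * g, by simpa using hN.conj_mem _ m.1.2 g⁻¹⟩, key2 _ m.2⟩, ?_, ?_⟩
  · intro m; ext; simp; group
  · intro m; ext; simp; group
end Aux

lemma card_filter_lt' (n k : ℕ) (h : k ≤ n) :
    (Finset.univ.filter (fun i : Fin n => (i : ℕ) < k)).card = k := by
  rw [← Fintype.card_subtype]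
  rw [Fintype.card_congr
    (⟨fun i => (⟨i.1, i.2⟩ : Fin k), fun j => ⟨⟨j.1, lt_of_lt_of_le j.2 h⟩, j.2⟩,
      fun i => rfl, fun j => rfl⟩ : {i : Fin n // (i : ℕ) < k} ≃ Fin k)]
  exact Fintype.card_fin k

lemma card_pi_commute' {T : Type*} [Group T] [Finite T] (n : ℕ) (x : T)
    (P : Fin n → Prop) [DecidablePred P] :
    Nat.card {f : Fin n → T // Commute f (fun i => if P i then x else 1)}
      = (Nat.card {t : T // Commute t x}) ^ (Finset.univ.filter P).card
        * (Nat.card T) ^ (n - (Finset.univ.filter P).card) := by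
  have e1 : {f : Fin n → T // Commute f (fun i => if P i then x else 1)}
      ≃ ∀ i : Fin n, {t : T // Commute t (if P i then x else 1)} := by
    refine (Equiv.subtypeEquivRight ?_).trans Equiv.subtypePiEquivPi
    intro f
    simp only [Commute, SemiconjBy, funext_iff, Pi.mul_apply]
  rw [Nat.card_congr e1, Nat.card_pi]
  have e2 : ∀ i : Fin n, Nat.card {t : T // Commute t (if P i then x else 1)}
      = if P i then Nat.card {t : T // Commute t x} else Nat.card T := by
    intro i
    by_cases h : P i <;> simp only [h, if_true, if_false]
    exact Nat.card_congr (Equiv.subtypeUnivEquiv (fun t => Commute.one_right t))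
  rw [Finset.prod_congr rfl (fun i _ => e2 i), Finset.prod_ite, Finset.prod_const,
    Finset.prod_const]
  have h3 := Finset.card_filter_add_card_filter_not (s := (Finset.univ : Finset (Fin n))) P
  simp only [Finset.card_fin] at h3
  have h4 : (Finset.univ.filter fun a => ¬ P a).card = n - (Finset.univ.filter P).card := by omega
  rw [h4]

/-- `k_p(G)`: the number of conjugacy classes of `G` consisting of `p`-elements
(the class of the identity is counted). -/
noncomputable def kpEl (p : ℕ) (G : Type*) [Group G] : ℕ :=
  Nat.card {c : ConjClasses G // ∀ g ∈ c.carrier, IsPElement p g}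

/-- Let `p` be a prime, `T` a non-abelian finite simple group of order divisible by
`p`, `n ≥ 2`, and `G` a finite group with a normal subgroup `N` isomorphic to the
direct product of `n` copies of `T`.  Then `G` has at least two conjugacy classes of
non-trivial `p`-elements, i.e. `k_p(G) ≥ 3`. -/
theorem kp_ge_three_of_normal_power_of_simple
    (p : ℕ) (hp : p.Prime) (T : Type*) [Group T] [Finite T]
    (hT : IsSimpleGroup T) (hnab : ∃ a b : T, a * b ≠ b * a)
    (hpT : p ∣ Nat.card T)
    (n : ℕ) (hn : 2 ≤ n)
    (G : Type*) [Group G] [Finite G] (N : Subgroup G) (hN : N.Normal)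
    (hiso : Nonempty (N ≃* (Fin n → T))) :
    (∃ x y : G, IsPElement p x ∧ x ≠ 1 ∧ IsPElement p y ∧ y ≠ 1 ∧ ¬ IsConj x y) ∧
    3 ≤ kpEl p G := by
  haveI : Fact p.Prime := ⟨hp⟩
  haveI := Fintype.ofFinite T
  -- an element of order p in T
  obtain ⟨x, hx⟩ : ∃ x : T, orderOf x = p := by
    apply exists_prime_orderOf_dvd_card p
    rwa [← Nat.card_eq_fintype_card]
  have hx1 : x ≠ 1 := by
    intro h; rw [h, orderOf_one] at hx; exact hp.ne_one hx.symm
  -- centralizer count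
  set c := Nat.card {t : T // Commute t x} with hc_def
  set M := Nat.card T with hM_def
  have hcC : c = Nat.card (Subgroup.centralizer ({x} : Set T)) := by
    apply Nat.card_congr
    exact Equiv.subtypeEquivRight (fun t => by
      rw [Subgroup.mem_centralizer_singleton_iff]; exact Iff.rfl)
  have hcenter : Subgroup.center T = ⊥ := by
    rcases hT.eq_bot_or_eq_top_of_normal (Subgroup.center T) inferInstance with h | h
    · exact h
    · exfalso
      obtain ⟨a, b, hab⟩ := hnab
      exact hab ((Subgroup.mem_center_iff.mp (h ▸ Subgroup.mem_top b)) a)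
  have hCne : Subgroup.centralizer ({x} : Set T) ≠ ⊤ := by
    intro h
    have : x ∈ Subgroup.center T := by
      rw [Subgroup.mem_center_iff]
      intro g
      have : g ∈ Subgroup.centralizer ({x} : Set T) := h ▸ Subgroup.mem_top g
      exact Subgroup.mem_centralizer_singleton_iff.mp this
    rw [hcenter, Subgroup.mem_bot] at this
    exact hx1 this
  have hcM : c < M := by
    have hmul := Subgroup.card_mul_index (Subgroup.centralizer ({x} : Set T))
    rw [← hcC] at hmul
    have hi1 : (Subgroup.centralizer ({x} : Set T)).index ≠ 1 := fun h =>
      hCne (Subgroup.index_eq_one.mp h)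
    have hi0 : (Subgroup.centralizer ({x} : Set T)).index ≠ 0 :=
      Subgroup.index_ne_zero_of_finite
    haveI : Nonempty {t : T // Commute t x} := ⟨⟨1, Commute.one_left x⟩⟩
    have hc0 : 0 < c := Nat.card_pos
    have h2 : c * 2 ≤ c * (Subgroup.centralizer ({x} : Set T)).index :=
      Nat.mul_le_mul_left c (by omega)
    omega
  have hM0 : 0 < M := Nat.card_pos
  haveI : Nonempty {t : T // Commute t x} := ⟨⟨1, Commute.one_left x⟩⟩
  have hc0 : 0 < c := Nat.card_pos
  -- the two elements
  obtain ⟨e⟩ := hiso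
  set fa : Fin n → T := fun i => if (i : ℕ) < 1 then x else 1 with hfa_def
  set fb : Fin n → T := fun i => if (i : ℕ) < 2 then x else 1 with hfb_def
  set a : G := ↑(e.symm fa) with ha_def
  set b : G := ↑(e.symm fb) with hb_def
  have hfp : ∀ (f : Fin n → T), (∀ i, f i = x ∨ f i = 1) → f ^ p = 1 := by
    intro f hf
    funext i
    rcases hf i with h | h <;>
      simp [Pi.pow_apply, Pi.one_apply, h, ← hx, pow_orderOf_eq_one]
  have hfa_ne : fa ≠ 1 := by
    intro h
    have := congrFun h ⟨0, by omega⟩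
    simp [hfa_def] at this
    exact hx1 this
  have hfb_ne : fb ≠ 1 := by
    intro h
    have := congrFun h ⟨0, by omega⟩
    simp [hfb_def] at this
    exact hx1 this
  have coe_ne_one : ∀ (f : Fin n → T), f ≠ 1 → (↑(e.symm f) : G) ≠ 1 := by
    intro f hf h
    apply hf
    have : e.symm f = (1 : N) := Subtype.ext (by simpa using h)
    have := congrArg e this
    simpa using this
  have coe_pow_eq_one : ∀ (f : Fin n → T), f ^ p = 1 → (↑(e.symm f) : G) ^ p = 1 := by
    intro f hf
    have : (e.symm f) ^ p = (1 : N) := by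
      rw [← map_pow, hf, map_one]
    rw [← Subgroup.coe_pow, this, Subgroup.coe_one]
  have ha1 : a ≠ 1 := coe_ne_one fa hfa_ne
  have hb1 : b ≠ 1 := coe_ne_one fb hfb_ne
  have hfa_or : ∀ i, fa i = x ∨ fa i = 1 := by
    intro i; simp only [hfa_def]; split
    · exact Or.inl rfl
    · exact Or.inr rfl
  have hfb_or : ∀ i, fb i = x ∨ fb i = 1 := by
    intro i; simp only [hfb_def]; split
    · exact Or.inl rfl
    · exact Or.inr rfl
  have hap : orderOf a = p := orderOf_eq_prime (coe_pow_eq_one fa (hfp fa hfa_or)) ha1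
  have hbp : orderOf b = p := orderOf_eq_prime (coe_pow_eq_one fb (hfp fb hfb_or)) hb1
  have hPa : IsPElement p a := ⟨1, by rwa [pow_one]⟩
  have hPb : IsPElement p b := ⟨1, by rwa [pow_one]⟩
  -- counting transfer through e
  have card_N_eq : ∀ (f : Fin n → T),
      Nat.card {m : N // Commute (↑m : G) ↑(e.symm f)}
        = Nat.card {h : Fin n → T // Commute h f} := by
    intro f
    apply Nat.card_congr
    refine Equiv.subtypeEquiv e.toEquiv (fun m => ?_)
    rw [commute_coe_iff']
    constructor
    · intro h
      have := h.map e.toMonoidHom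
      simpa using this
    · intro h
      have := h.map e.symm.toMonoidHom
      simpa using this
  -- non-conjugacy
  have hnc : ¬ IsConj a b := by
    intro hconj
    rw [isConj_iff] at hconj
    obtain ⟨g, hg⟩ := hconj
    have hg' : g * a = b * g := by
      rw [← hg]; group
    have heq := card_commute_conj_eq' N hN hg'
    rw [ha_def, hb_def, card_N_eq, card_N_eq] at heq
    rw [hfa_def, hfb_def] at heq
    rw [card_pi_commute' n x (fun i : Fin n => (i : ℕ) < 1),
      card_pi_commute' n x (fun i : Fin n => (i : ℕ) < 2)] at heq
    rw [card_filter_lt' n 1 (by omega), card_filter_lt' n 2 hn] at heq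
    rw [← hc_def, ← hM_def] at heq
    have hn1 : n - 1 = (n - 2) + 1 := by omega
    have hK : 0 < M ^ (n - 2) := pow_pos hM0 _
    have h1 : c * (M ^ (n - 2) * M) = c * (c * M ^ (n - 2)) := by
      calc c * (M ^ (n - 2) * M) = c ^ 1 * M ^ (n - 1) := by
            rw [pow_one, hn1, pow_succ]
        _ = c ^ 2 * M ^ (n - 2) := heq
        _ = c * (c * M ^ (n - 2)) := by ring
    have h2 : M ^ (n - 2) * M = c * M ^ (n - 2) := Nat.eq_of_mul_eq_mul_left hc0 h1
    have h3 : M * M ^ (n - 2) = c * M ^ (n - 2) := by rw [← h2]; ring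
    have h4 : M = c := Nat.eq_of_mul_eq_mul_right hK h3
    omega
  refine ⟨⟨a, b, hPa, ha1, hPb, hb1, hnc⟩, ?_⟩
  -- three conjugacy classes
  haveI : Finite (ConjClasses G) := Finite.of_surjective _ ConjClasses.mk_surjective
  have hclass : ∀ z : G, IsPElement p z →
      ∀ g ∈ (ConjClasses.mk z).carrier, IsPElement p g := by
    intro z hz g hg
    rw [ConjClasses.mem_carrier_iff_mk_eq, ConjClasses.mk_eq_mk_iff_isConj] at hg
    obtain ⟨k, hk⟩ := hz
    exact ⟨k, by rw [orderOf_eq_of_isConj' hg, hk]⟩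
  have hP1 : IsPElement p (1 : G) := ⟨0, by simp⟩
  set S := {c : ConjClasses G // ∀ g ∈ c.carrier, IsPElement p g} with hS_def
  let c0 : S := ⟨ConjClasses.mk 1, hclass 1 hP1⟩
  let ca : S := ⟨ConjClasses.mk a, hclass a hPa⟩
  let cb : S := ⟨ConjClasses.mk b, hclass b hPb⟩
  have h01 : ConjClasses.mk (1 : G) ≠ ConjClasses.mk a := by
    rw [Ne, ConjClasses.mk_eq_mk_iff_isConj, isConj_one_right]
    exact ha1
  have h02 : ConjClasses.mk (1 : G) ≠ ConjClasses.mk b := by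
    rw [Ne, ConjClasses.mk_eq_mk_iff_isConj, isConj_one_right]
    exact hb1
  have h12 : ConjClasses.mk a ≠ ConjClasses.mk b := by
    rw [Ne, ConjClasses.mk_eq_mk_iff_isConj]
    exact hnc
  have ne1 : c0 ≠ ca := fun h => h01 (congrArg Subtype.val h)
  have ne2 : c0 ≠ cb := fun h => h02 (congrArg Subtype.val h)
  have ne3 : ca ≠ cb := fun h => h12 (congrArg Subtype.val h)
  classical
  haveI := Fintype.ofFinite S
  have hcard3 : ({c0, ca, cb} : Finset S).card = 3 := by
    rw [Finset.card_insert_of_notMem (by simp [ne1, ne2]),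
      Finset.card_insert_of_notMem (by simp [ne3]), Finset.card_singleton]
  have hle : (3 : ℕ) ≤ Fintype.card S := by
    rw [← hcard3]; exact Finset.card_le_univ _
  have : (3 : ℕ) ≤ Nat.card S := by rwa [Nat.card_eq_fintype_card]
  exact this
end

section
/- Let p be a prime, S a non-abelian finite simple group, and G a finite group having a normal subgroup N isomorphic to S × S. Let m denote the number of orbits of the natural action of Aut(S) on the set of conjugacy classes of p-regular elements of S. Then k_{p'}(G) ≥ m(m+1)/2. -/
/-- `k_{p'}(G)`: the number of conjugacy classes of `G` consisting of `p`-regular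
elements (elements of order not divisible by `p`). -/
noncomputable def kpReg (p : ℕ) (G : Type*) [Group G] : ℕ :=
  Nat.card {c : ConjClasses G // ∀ g ∈ c.carrier, ¬ p ∣ orderOf g}

section Aux

variable {S : Type*} [Group S]

lemma aux_center_eq_one (hS : IsSimpleGroup S) (hnab : ∃ a b : S, a * b ≠ b * a)
    {a : S} (ha : ∀ t : S, a * t = t * a) : a = 1 := by
  have hmem : a ∈ Subgroup.center S := Subgroup.mem_center_iff.mpr fun t => (ha t).symm
  rcases hS.eq_bot_or_eq_top_of_normal (Subgroup.center S) inferInstance with h | h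
  · simpa [h, Subgroup.mem_bot] using hmem
  · obtain ⟨x, y, hxy⟩ := hnab
    have hx : x ∈ Subgroup.center S := h.symm ▸ Subgroup.mem_top x
    exact absurd (Subgroup.mem_center_iff.mp hx y).symm hxy

lemma aux_inl (hS : IsSimpleGroup S) (hnab : ∃ a b : S, a * b ≠ b * a)
    {K : Subgroup (S × S)} (hK : K.Normal) {a b : S}
    (hab : (a, b) ∈ K) (ha : a ≠ 1) : ∀ s : S, ((s, 1) : S × S) ∈ K := by
  set A : Subgroup S := K.comap (MonoidHom.inl S S) with hA
  have hAn : A.Normal := by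
    constructor
    intro n hn g
    have h1 : ((g, 1) : S × S) * (n, 1) * ((g, 1) : S × S)⁻¹ ∈ K := hK.conj_mem _ hn (g, 1)
    have h2 : ((g * n * g⁻¹, 1) : S × S) ∈ K := by
      simpa [Prod.ext_iff] using h1
    simpa [hA, Subgroup.mem_comap] using h2
  have hAne : A ≠ ⊥ := by
    obtain ⟨t, ht⟩ : ∃ t : S, ¬ a * t = t * a := by
      by_contra h; push_neg at h; exact ha (aux_center_eq_one hS hnab h)
    have h1 : ((t, 1) : S × S) * (a, b) * ((t, 1) : S × S)⁻¹ * ((a, b) : S × S)⁻¹ ∈ K :=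
      K.mul_mem (hK.conj_mem _ hab (t, 1)) (K.inv_mem hab)
    have h2 : ((t * a * t⁻¹ * a⁻¹, 1) : S × S) ∈ K := by
      simpa [Prod.ext_iff, mul_assoc] using h1
    intro hbot
    have h3 : t * a * t⁻¹ * a⁻¹ ∈ A := by simpa [hA, Subgroup.mem_comap] using h2
    rw [hbot, Subgroup.mem_bot] at h3
    rw [mul_inv_eq_one, mul_inv_eq_iff_eq_mul] at h3
    exact ht h3.symm
  have hAtop : A = ⊤ := (hS.eq_bot_or_eq_top_of_normal A hAn).resolve_left hAne
  intro s
  have : s ∈ A := hAtop ▸ Subgroup.mem_top s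
  simpa [hA, Subgroup.mem_comap] using this

lemma aux_inr (hS : IsSimpleGroup S) (hnab : ∃ a b : S, a * b ≠ b * a)
    {K : Subgroup (S × S)} (hK : K.Normal) {a b : S}
    (hab : (a, b) ∈ K) (hb : b ≠ 1) : ∀ s : S, ((1, s) : S × S) ∈ K := by
  set B : Subgroup S := K.comap (MonoidHom.inr S S) with hB
  have hBn : B.Normal := by
    constructor
    intro n hn g
    have h1 : ((1, g) : S × S) * (1, n) * ((1, g) : S × S)⁻¹ ∈ K := hK.conj_mem _ hn (1, g)
    have h2 : ((1, g * n * g⁻¹) : S × S) ∈ K := by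
      simpa [Prod.ext_iff] using h1
    simpa [hB, Subgroup.mem_comap] using h2
  have hBne : B ≠ ⊥ := by
    obtain ⟨t, ht⟩ : ∃ t : S, ¬ b * t = t * b := by
      by_contra h; push_neg at h; exact hb (aux_center_eq_one hS hnab h)
    have h1 : ((1, t) : S × S) * (a, b) * ((1, t) : S × S)⁻¹ * ((a, b) : S × S)⁻¹ ∈ K :=
      K.mul_mem (hK.conj_mem _ hab (1, t)) (K.inv_mem hab)
    have h2 : ((1, t * b * t⁻¹ * b⁻¹) : S × S) ∈ K := by
      simpa [Prod.ext_iff, mul_assoc] using h1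
    intro hbot
    have h3 : t * b * t⁻¹ * b⁻¹ ∈ B := by simpa [hB, Subgroup.mem_comap] using h2
    rw [hbot, Subgroup.mem_bot] at h3
    rw [mul_inv_eq_one, mul_inv_eq_iff_eq_mul] at h3
    exact ht h3.symm
  have hBtop : B = ⊤ := (hS.eq_bot_or_eq_top_of_normal B hBn).resolve_left hBne
  intro s
  have : s ∈ B := hBtop ▸ Subgroup.mem_top s
  simpa [hB, Subgroup.mem_comap] using this

lemma aux_normal_classify (hS : IsSimpleGroup S) (hnab : ∃ a b : S, a * b ≠ b * a)
    {K : Subgroup (S × S)} (hK : K.Normal) (hbot : K ≠ ⊥) (htop : K ≠ ⊤) :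
    K = (MonoidHom.snd S S).ker ∨ K = (MonoidHom.fst S S).ker := by
  by_cases h1 : ∃ x : S × S, x ∈ K ∧ x.1 ≠ 1
  · left
    obtain ⟨⟨a, b⟩, hxK, hxa⟩ := h1
    have hAle : ∀ s : S, ((s, 1) : S × S) ∈ K := aux_inl hS hnab hK hxK hxa
    apply le_antisymm
    · rintro ⟨c, d⟩ hcd
      rw [MonoidHom.mem_ker]
      by_contra hd
      have hBle : ∀ s : S, ((1, s) : S × S) ∈ K := aux_inr hS hnab hK hcd hd
      apply htop
      rw [eq_top_iff]
      rintro ⟨u, v⟩ -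
      have huv : ((u, v) : S × S) = (u, 1) * (1, v) := by simp
      rw [huv]
      exact K.mul_mem (hAle u) (hBle v)
    · rintro ⟨c, d⟩ hcd
      rw [MonoidHom.mem_ker] at hcd
      have : d = 1 := hcd
      subst this
      exact hAle c
  · push_neg at h1
    by_cases h2 : ∃ x : S × S, x ∈ K ∧ x.2 ≠ 1
    · right
      obtain ⟨⟨a, b⟩, hxK, hxb⟩ := h2
      have hBle : ∀ s : S, ((1, s) : S × S) ∈ K := aux_inr hS hnab hK hxK hxb
      apply le_antisymm
      · rintro ⟨c, d⟩ hcd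
        rw [MonoidHom.mem_ker]
        exact h1 _ hcd
      · rintro ⟨c, d⟩ hcd
        rw [MonoidHom.mem_ker] at hcd
        have : c = 1 := hcd
        subst this
        exact hBle d
    · push_neg at h2
      exfalso
      apply hbot
      rw [eq_bot_iff]
      rintro ⟨c, d⟩ hcd
      have hc : c = 1 := h1 _ hcd
      have hd : d = 1 := h2 _ hcd
      subst hc; subst hd
      rfl

lemma aux_diag_form (ψ : (S × S) ≃* (S × S))
    (hA : ∀ x : S, (ψ (x, 1)).2 = 1) (hB : ∀ y : S, (ψ (1, y)).1 = 1)
    (hA' : ∀ x : S, (ψ.symm (x, 1)).2 = 1) (hB' : ∀ y : S, (ψ.symm (1, y)).1 = 1) :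
    ∃ α β : S ≃* S, ∀ x y : S, ψ (x, y) = (α x, β y) := by
  let f1 : S →* S := (MonoidHom.fst S S).comp (ψ.toMonoidHom.comp (MonoidHom.inl S S))
  let g1 : S →* S := (MonoidHom.fst S S).comp (ψ.symm.toMonoidHom.comp (MonoidHom.inl S S))
  let f2 : S →* S := (MonoidHom.snd S S).comp (ψ.toMonoidHom.comp (MonoidHom.inr S S))
  let g2 : S →* S := (MonoidHom.snd S S).comp (ψ.symm.toMonoidHom.comp (MonoidHom.inr S S))
  have hψ1 : ∀ x : S, ψ (x, 1) = (f1 x, 1) := fun x => Prod.ext rfl (hA x)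
  have hψ1' : ∀ x : S, ψ.symm (x, 1) = (g1 x, 1) := fun x => Prod.ext rfl (hA' x)
  have hψ2 : ∀ y : S, ψ (1, y) = (1, f2 y) := fun y => Prod.ext (hB y) rfl
  have hψ2' : ∀ y : S, ψ.symm (1, y) = (1, g2 y) := fun y => Prod.ext (hB' y) rfl
  have hgf1 : g1.comp f1 = MonoidHom.id S := by
    ext x
    show (ψ.symm (f1 x, 1)).1 = x
    rw [← hψ1 x, MulEquiv.symm_apply_apply]
  have hfg1 : f1.comp g1 = MonoidHom.id S := by
    ext x
    show (ψ (g1 x, 1)).1 = x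
    rw [← hψ1' x, MulEquiv.apply_symm_apply]
  have hgf2 : g2.comp f2 = MonoidHom.id S := by
    ext y
    show (ψ.symm (1, f2 y)).2 = y
    rw [← hψ2 y, MulEquiv.symm_apply_apply]
  have hfg2 : f2.comp g2 = MonoidHom.id S := by
    ext y
    show (ψ (1, g2 y)).2 = y
    rw [← hψ2' y, MulEquiv.apply_symm_apply]
  refine ⟨MonoidHom.toMulEquiv f1 g1 hgf1 hfg1, MonoidHom.toMulEquiv f2 g2 hgf2 hfg2,
    fun x y => ?_⟩
  have hxy : ((x, y) : S × S) = (x, 1) * (1, y) := by simp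
  rw [hxy, map_mul, hψ1 x, hψ2 y]
  simp [MonoidHom.toMulEquiv]

lemma aux_ker_snd_ne_bot {a0 : S} (ha0 : a0 ≠ 1) : (MonoidHom.snd S S).ker ≠ ⊥ := by
  intro h
  have h1 : ((a0, 1) : S × S) ∈ (MonoidHom.snd S S).ker := by
    simp [MonoidHom.mem_ker, Subgroup.mem_prod]
  rw [h, Subgroup.mem_bot, Prod.ext_iff] at h1
  exact ha0 h1.1

lemma aux_ker_fst_ne_bot {a0 : S} (ha0 : a0 ≠ 1) : (MonoidHom.fst S S).ker ≠ ⊥ := by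
  intro h
  have h1 : ((1, a0) : S × S) ∈ (MonoidHom.fst S S).ker := by
    simp [MonoidHom.mem_ker, Subgroup.mem_prod]
  rw [h, Subgroup.mem_bot, Prod.ext_iff] at h1
  exact ha0 h1.2

lemma aux_ker_snd_ne_top {a0 : S} (ha0 : a0 ≠ 1) : (MonoidHom.snd S S).ker ≠ ⊤ := by
  intro h
  have h1 : ((1, a0) : S × S) ∈ (MonoidHom.snd S S).ker := h.symm ▸ Subgroup.mem_top _
  rw [MonoidHom.mem_ker] at h1
  exact ha0 h1

lemma aux_ker_fst_ne_top {a0 : S} (ha0 : a0 ≠ 1) : (MonoidHom.fst S S).ker ≠ ⊤ := by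
  intro h
  have h1 : ((a0, 1) : S × S) ∈ (MonoidHom.fst S S).ker := h.symm ▸ Subgroup.mem_top _
  rw [MonoidHom.mem_ker] at h1
  exact ha0 h1

lemma aux_mulaut_prod (hS : IsSimpleGroup S) (hnab : ∃ a b : S, a * b ≠ b * a)
    (ψ : (S × S) ≃* (S × S)) :
    (∃ α β : S ≃* S, ∀ x y : S, ψ (x, y) = (α x, β y)) ∨
    (∃ α β : S ≃* S, ∀ x y : S, ψ (x, y) = (β y, α x)) := by
  obtain ⟨a0, ha0⟩ := exists_ne (1 : S)
  have hmapinj : Function.Injective (Subgroup.map ψ.toMonoidHom) :=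
    Subgroup.map_injective ψ.injective
  have hker_ne : (MonoidHom.snd S S).ker ≠ (MonoidHom.fst S S).ker := by
    intro h
    have h1 : ((a0, 1) : S × S) ∈ (MonoidHom.snd S S).ker := by
      simp [MonoidHom.mem_ker, Subgroup.mem_prod]
    rw [h, MonoidHom.mem_ker] at h1
    exact ha0 h1
  have key : ∀ L : Subgroup (S × S), L.Normal → L ≠ ⊥ → L ≠ ⊤ →
      Subgroup.map ψ.toMonoidHom L = (MonoidHom.snd S S).ker ∨
      Subgroup.map ψ.toMonoidHom L = (MonoidHom.fst S S).ker := by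
    intro L hLn hLbot hLtop
    refine aux_normal_classify hS hnab (Subgroup.Normal.map hLn _ ψ.surjective) ?_ ?_
    · intro h
      exact hLbot (hmapinj (h.trans (Subgroup.map_bot ψ.toMonoidHom).symm))
    · intro h
      exact hLtop (hmapinj (h.trans (Subgroup.map_top_of_surjective _ ψ.surjective).symm))
  have hsymm_mem : ∀ (L : Subgroup (S × S)) (u : S × S),
      u ∈ Subgroup.map ψ.toMonoidHom L → ψ.symm u ∈ L := by
    intro L u hu
    obtain ⟨v, hv, hvu⟩ := hu
    have : ψ.symm u = v := by rw [← hvu]; exact ψ.symm_apply_apply v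
    rwa [this]
  rcases key (MonoidHom.snd S S).ker inferInstance (aux_ker_snd_ne_bot ha0)
      (aux_ker_snd_ne_top ha0) with hKA | hKA
  · rcases key (MonoidHom.fst S S).ker inferInstance (aux_ker_fst_ne_bot ha0)
        (aux_ker_fst_ne_top ha0) with hKB | hKB
    · exact absurd (hmapinj (hKB.trans hKA.symm)) (fun h => hker_ne h.symm)
    · left
      refine aux_diag_form ψ ?_ ?_ ?_ ?_
      · intro x
        have : ψ (x, 1) ∈ (MonoidHom.snd S S).ker := by
          rw [← hKA]
          exact Subgroup.mem_map_of_mem _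
            (by simp [MonoidHom.mem_ker, Subgroup.mem_prod] : ((x, 1) : S × S) ∈ _)
        simpa [MonoidHom.mem_ker, Subgroup.mem_prod] using this
      · intro y
        have : ψ (1, y) ∈ (MonoidHom.fst S S).ker := by
          rw [← hKB]
          exact Subgroup.mem_map_of_mem _
            (by simp [MonoidHom.mem_ker, Subgroup.mem_prod] : ((1, y) : S × S) ∈ _)
        simpa [MonoidHom.mem_ker, Subgroup.mem_prod] using this
      · intro x
        have hx : ((x, 1) : S × S) ∈ Subgroup.map ψ.toMonoidHom (MonoidHom.snd S S).ker := by
          rw [hKA]; simp [MonoidHom.mem_ker, Subgroup.mem_prod]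
        have := hsymm_mem _ _ hx
        simpa [MonoidHom.mem_ker, Subgroup.mem_prod] using this
      · intro y
        have hy : ((1, y) : S × S) ∈ Subgroup.map ψ.toMonoidHom (MonoidHom.fst S S).ker := by
          rw [hKB]; simp [MonoidHom.mem_ker, Subgroup.mem_prod]
        have := hsymm_mem _ _ hy
        simpa [MonoidHom.mem_ker, Subgroup.mem_prod] using this
  · rcases key (MonoidHom.fst S S).ker inferInstance (aux_ker_fst_ne_bot ha0)
        (aux_ker_fst_ne_top ha0) with hKB | hKB
    · right
      set σ : (S × S) ≃* (S × S) := (MulEquiv.prodComm : (S × S) ≃* (S × S)) with hσ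
      set ψ' : (S × S) ≃* (S × S) := ψ.trans σ with hψ'
      have hψ'app : ∀ u : S × S, ψ' u = ((ψ u).2, (ψ u).1) := fun u => rfl
      have hψ'symm : ∀ u : S × S, ψ'.symm u = ψ.symm (u.2, u.1) := fun u => rfl
      have c1 : ∀ x : S, (ψ' (x, 1)).2 = 1 := by
        intro x
        rw [hψ'app]
        have : ψ (x, 1) ∈ (MonoidHom.fst S S).ker := by
          rw [← hKA]
          exact Subgroup.mem_map_of_mem _
            (by simp [MonoidHom.mem_ker, Subgroup.mem_prod] : ((x, 1) : S × S) ∈ _)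
        simpa [MonoidHom.mem_ker, Subgroup.mem_prod] using this
      have c2 : ∀ y : S, (ψ' (1, y)).1 = 1 := by
        intro y
        rw [hψ'app]
        have : ψ (1, y) ∈ (MonoidHom.snd S S).ker := by
          rw [← hKB]
          exact Subgroup.mem_map_of_mem _
            (by simp [MonoidHom.mem_ker, Subgroup.mem_prod] : ((1, y) : S × S) ∈ _)
        simpa [MonoidHom.mem_ker, Subgroup.mem_prod] using this
      have c3 : ∀ x : S, (ψ'.symm (x, 1)).2 = 1 := by
        intro x
        rw [hψ'symm]
        have hx : ((1, x) : S × S) ∈ Subgroup.map ψ.toMonoidHom (MonoidHom.snd S S).ker := by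
          rw [hKA]; simp [MonoidHom.mem_ker, Subgroup.mem_prod]
        have := hsymm_mem _ _ hx
        simpa [MonoidHom.mem_ker, Subgroup.mem_prod] using this
      have c4 : ∀ y : S, (ψ'.symm (1, y)).1 = 1 := by
        intro y
        rw [hψ'symm]
        have hy : ((y, 1) : S × S) ∈ Subgroup.map ψ.toMonoidHom (MonoidHom.fst S S).ker := by
          rw [hKB]; simp [MonoidHom.mem_ker, Subgroup.mem_prod]
        have := hsymm_mem _ _ hy
        simpa [MonoidHom.mem_ker, Subgroup.mem_prod] using this
      obtain ⟨α, β, hαβ⟩ := aux_diag_form ψ' c1 c2 c3 c4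
      refine ⟨α, β, fun x y => ?_⟩
      have h1 := hαβ x y
      rw [hψ'app, Prod.ext_iff] at h1
      exact Prod.ext h1.2 h1.1
    · exact absurd (hmapinj (hKA.trans hKB.symm)) hker_ne

lemma aux_map_mk (f : S →* S) (a : S) :
    ConjClasses.map f (ConjClasses.mk a) = ConjClasses.mk (f a) := rfl

lemma aux_orbit_eq {c c' : ConjClasses S} (φ0 : MulAut S)
    (h : ConjClasses.map φ0.toMonoidHom c = c') :
    {d : ConjClasses S | ∃ φ : MulAut S, ConjClasses.map φ.toMonoidHom c = d} =
    {d : ConjClasses S | ∃ φ : MulAut S, ConjClasses.map φ.toMonoidHom c' = d} := by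
  obtain ⟨a, rfl⟩ := ConjClasses.exists_rep c
  rw [aux_map_mk] at h
  subst h
  ext d
  simp only [Set.mem_setOf_eq]
  constructor
  · rintro ⟨φ, rfl⟩
    refine ⟨φ * φ0⁻¹, ?_⟩
    rw [aux_map_mk, aux_map_mk]
    congr 1
    show (φ * φ0⁻¹) (φ0 a) = φ a
    rw [MulAut.mul_apply]
    congr 1
    exact φ0.symm_apply_apply a
  · rintro ⟨φ, rfl⟩
    refine ⟨φ * φ0, ?_⟩
    rw [aux_map_mk, aux_map_mk]
    rfl

end Aux

/-- Let `p` be a prime, `S` a non-abelian finite simple group, and `G` a finite group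
with a normal subgroup `N ≅ S × S`.  Let `m` be the number of orbits of the natural
action of `Aut(S)` on the set of conjugacy classes of `p`-regular elements of `S`.
Then `k_{p'}(G) ≥ m(m+1)/2`. -/
theorem kpReg_ge_of_normal_square_of_simple
    (p : ℕ) (hp : p.Prime) (S : Type*) [Group S] [Finite S]
    (hS : IsSimpleGroup S) (hnab : ∃ a b : S, a * b ≠ b * a)
    (G : Type*) [Group G] [Finite G] (N : Subgroup G) (hN : N.Normal)
    (hiso : Nonempty (N ≃* (S × S)))
    (m : ℕ)
    (hm : m = Nat.card {O : Set (ConjClasses S) // ∃ c : ConjClasses S,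
        (∀ g ∈ c.carrier, ¬ p ∣ orderOf g) ∧
        O = {d : ConjClasses S | ∃ φ : MulAut S, ConjClasses.map φ.toMonoidHom c = d}}) :
    m * (m + 1) / 2 ≤ kpReg p G := by
  classical
  haveI := hN
  obtain ⟨e⟩ := hiso
  let eT : {O : Set (ConjClasses S) // ∃ c : ConjClasses S,
        (∀ g ∈ c.carrier, ¬ p ∣ orderOf g) ∧
        O = {d : ConjClasses S | ∃ φ : MulAut S, ConjClasses.map φ.toMonoidHom c = d}} ≃ Fin m :=
    Finite.equivFinOfCardEq hm.symm
  let c : Fin m → ConjClasses S := fun i => ((eT.symm i).2).choose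
  have hc : ∀ i, (∀ g ∈ (c i).carrier, ¬ p ∣ orderOf g) ∧
      (eT.symm i).1 = {d : ConjClasses S | ∃ φ : MulAut S,
        ConjClasses.map φ.toMonoidHom (c i) = d} :=
    fun i => ((eT.symm i).2).choose_spec
  let x : Fin m → S := fun i => ((c i).exists_rep).choose
  have hx : ∀ i, ConjClasses.mk (x i) = c i := fun i => ((c i).exists_rep).choose_spec
  have hxreg : ∀ i, ¬ p ∣ orderOf (x i) := fun i =>
    (hc i).1 (x i) (ConjClasses.mem_carrier_iff_mk_eq.mpr (hx i))
  let ι : (S × S) →* G := N.subtype.comp e.symm.toMonoidHom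
  have hιinj : Function.Injective ι := N.subtype_injective.comp e.symm.injective
  have hord : ∀ u : S × S, orderOf (ι u) = orderOf u := fun u => orderOf_injective ι hιinj u
  have hreg : ∀ i j : Fin m, ∀ g ∈ (ConjClasses.mk (ι (x i, x j))).carrier, ¬ p ∣ orderOf g := by
    intro i j g hg hdvd
    rw [ConjClasses.mem_carrier_iff_mk_eq, ConjClasses.mk_eq_mk_iff_isConj] at hg
    obtain ⟨u, hu⟩ := hg
    have hordg : orderOf g = orderOf (ι (x i, x j)) := SemiconjBy.orderOf_eq _ hu
    rw [hordg, hord, Prod.orderOf_mk] at hdvd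
    have hlcm : Nat.lcm (orderOf (x i)) (orderOf (x j)) ∣ orderOf (x i) * orderOf (x j) :=
      Nat.lcm_dvd (dvd_mul_right _ _) (dvd_mul_left _ _)
    rcases (Nat.Prime.dvd_mul hp).mp (hdvd.trans hlcm) with h | h
    · exact hxreg i h
    · exact hxreg j h
  have key : ∀ g : G, ∀ u v : S × S, g * (ι u) * g⁻¹ = ι v →
      ∃ ψ : (S × S) ≃* (S × S), ψ u = v := by
    intro g u v hguv
    refine ⟨(e.symm.trans (MulAut.conjNormal g)).trans e, ?_⟩
    show e ((MulAut.conjNormal g) (e.symm u)) = v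
    have h1 : (MulAut.conjNormal g) (e.symm u) = e.symm v := by
      apply Subtype.ext
      rw [MulAut.conjNormal_apply]
      exact hguv
    rw [h1, e.apply_symm_apply]
  have hstep : ∀ i k : Fin m, (∃ α : S ≃* S, α (x i) = x k) → i = k := by
    rintro i k ⟨α, hα⟩
    have heq : eT.symm i = eT.symm k := by
      apply Subtype.ext
      rw [(hc i).2, (hc k).2]
      apply aux_orbit_eq (α : MulAut S)
      rw [← hx i, ← hx k, aux_map_mk]
      exact congrArg ConjClasses.mk hα
    exact eT.symm.injective heq
  let F : {q : Fin m × Fin m // q.1 ≤ q.2} →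
      {d : ConjClasses G // ∀ g ∈ d.carrier, ¬ p ∣ orderOf g} :=
    fun q => ⟨ConjClasses.mk (ι (x q.1.1, x q.1.2)), hreg q.1.1 q.1.2⟩
  have hinj : Function.Injective F := by
    rintro ⟨⟨i, j⟩, hij⟩ ⟨⟨k, l⟩, hkl⟩ hF
    have hmk : ConjClasses.mk (ι (x i, x j)) = ConjClasses.mk (ι (x k, x l)) :=
      congrArg Subtype.val hF
    rw [ConjClasses.mk_eq_mk_iff_isConj, isConj_iff] at hmk
    obtain ⟨g, hg⟩ := hmk
    obtain ⟨ψ, hψ⟩ := key g _ _ hg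
    rcases aux_mulaut_prod hS hnab ψ with ⟨α, β, hab⟩ | ⟨α, β, hab⟩
    · have h2 := hψ
      rw [hab, Prod.ext_iff] at h2
      have hik : i = k := hstep i k ⟨α, h2.1⟩
      have hjl : j = l := hstep j l ⟨β, h2.2⟩
      exact Subtype.ext (Prod.ext hik hjl)
    · have h2 := hψ
      rw [hab, Prod.ext_iff] at h2
      have hjk : j = k := hstep j k ⟨β, h2.1⟩
      have hil : i = l := hstep i l ⟨α, h2.2⟩
      have hik : i = k := le_antisymm (le_of_le_of_eq hij hjk) (le_of_le_of_eq hkl hil.symm)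
      have hjl : j = l := le_antisymm (le_of_eq_of_le hjk hkl) (le_of_eq_of_le hil.symm hij)
      exact Subtype.ext (Prod.ext hik hjl)
  have h1 : Nat.card {q : Fin m × Fin m // q.1 ≤ q.2} = m * (m + 1) / 2 := by
    have h2 : Nat.card (Sym2 (Fin m)) = Nat.card {q : Fin m × Fin m // q.1 ≤ q.2} :=
      Nat.card_congr Sym2.sortEquiv
    rw [← h2, Nat.card_eq_fintype_card, Sym2.card, Fintype.card_fin, Nat.choose_two_right,
      Nat.add_sub_cancel, Nat.mul_comm]
  calc m * (m + 1) / 2 = Nat.card {q : Fin m × Fin m // q.1 ≤ q.2} := h1.symm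
    _ ≤ kpReg p G := Nat.card_le_card_of_injective F hinj
end

section
/- Let p ≥ 5 be a prime and n ≥ 2p an integer. Let G be a finite group having a normal subgroup isomorphic to the alternating group A_n whose centralizer in G is trivial (equivalently, A_n ⊴ G ≤ Aut(A_n)). Then k_{p'}(G) ≥ p. -/
/-- If conjugate, then equal orders. -/
lemma isConj_orderOf_eq {G : Type*} [Group G] {a b : G} (h : IsConj a b) :
    orderOf a = orderOf b := by
  obtain ⟨c, hc⟩ := h
  exact SemiconjBy.orderOf_eq (↑c) hc

/-- Counting lemma: a set of realizable `p`-regular orders bounds `kpReg` below. -/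
lemma card_le_kpReg {G : Type*} [Group G] [Finite G] (p : ℕ) (S : Finset ℕ)
    (h : ∀ m ∈ S, ¬ p ∣ m ∧ ∃ x : G, orderOf x = m) :
    S.card ≤ kpReg p G := by
  classical
  choose hnd x hx using h
  let f : S → {c : ConjClasses G // ∀ g ∈ c.carrier, ¬ p ∣ orderOf g} := fun m =>
    ⟨ConjClasses.mk (x m m.2), by
      intro g hg
      rw [ConjClasses.mem_carrier_iff_mk_eq, ConjClasses.mk_eq_mk_iff_isConj] at hg
      rw [isConj_orderOf_eq hg, hx m m.2]
      exact hnd m m.2⟩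
  have hinj : Function.Injective f := by
    intro a b hab
    have : ConjClasses.mk (x a a.2) = ConjClasses.mk (x b b.2) := by
      simpa [f] using congrArg Subtype.val hab
    have : IsConj (x a a.2) (x b b.2) := ConjClasses.mk_eq_mk_iff_isConj.mp this
    have := isConj_orderOf_eq this
    rw [hx a a.2, hx b b.2] at this
    exact Subtype.ext this
  calc S.card = Nat.card S := (Nat.card_eq_finsetCard S).symm
    _ ≤ _ := Nat.card_le_card_of_injective f hinj

/-- An odd `m`-cycle gives an element of order `m` in the alternating group. -/
lemma exists_alternating_orderOf_odd (n m : ℕ) (hm2 : 3 ≤ m) (hodd : Odd m)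
    (hmn : m ≤ n) : ∃ x : alternatingGroup (Fin n), orderOf x = m := by
  classical
  set l : List (Fin n) := (List.finRange m).map (Fin.castLE hmn) with hl
  have hnd : l.Nodup := (List.nodup_finRange m).map (Fin.castLE_injective hmn)
  have hlen : l.length = m := by simp [hl]
  have hc : (l.formPerm).IsCycle := List.isCycle_formPerm hnd (by omega)
  have hne : ∀ y : Fin n, l ≠ [y] := by
    intro y hy
    apply_fun List.length at hy
    simp [hlen] at hy
    omega
  have hsupp : (l.formPerm).support = l.toFinset :=
    List.support_formPerm_of_nodup l hnd hne
  have hcard : (l.formPerm).support.card = m := by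
    rw [hsupp, List.toFinset_card_of_nodup hnd, hlen]
  have horder : orderOf l.formPerm = m := by rw [hc.orderOf, hcard]
  have hsign : Equiv.Perm.sign l.formPerm = 1 := by
    rw [hc.sign, hcard, hodd.neg_one_pow]
    norm_num
  exact ⟨⟨l.formPerm, Equiv.Perm.mem_alternatingGroup.mpr hsign⟩, by
    rw [Subgroup.orderOf_mk, horder]⟩

/-- A double transposition gives an element of order `2` in the alternating group. -/
lemma exists_alternating_orderOf_two (n : ℕ) (hn : 4 ≤ n) :
    ∃ x : alternatingGroup (Fin n), orderOf x = 2 := by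
  set a0 : Fin n := ⟨0, by omega⟩
  set a1 : Fin n := ⟨1, by omega⟩
  set a2 : Fin n := ⟨2, by omega⟩
  set a3 : Fin n := ⟨3, by omega⟩
  have h01 : a0 ≠ a1 := by simp [a0, a1, Fin.ext_iff]
  have h23 : a2 ≠ a3 := by simp [a2, a3, Fin.ext_iff]
  set s : Equiv.Perm (Fin n) := Equiv.swap a0 a1
  set t : Equiv.Perm (Fin n) := Equiv.swap a2 a3
  have hdisj : Equiv.Perm.Disjoint s t := by
    intro x
    by_cases hx0 : x = a0
    · right; subst hx0
      exact Equiv.swap_apply_of_ne_of_ne (by simp [a0, a2, Fin.ext_iff])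
        (by simp [a0, a3, Fin.ext_iff])
    · by_cases hx1 : x = a1
      · right; subst hx1
        exact Equiv.swap_apply_of_ne_of_ne (by simp [a1, a2, Fin.ext_iff])
          (by simp [a1, a3, Fin.ext_iff])
      · left
        exact Equiv.swap_apply_of_ne_of_ne hx0 hx1
  have hcomm : Commute s t := hdisj.commute
  have hsq : (s * t) ^ 2 = 1 := by
    rw [hcomm.mul_pow, sq, sq, Equiv.swap_mul_self, Equiv.swap_mul_self, one_mul]
  have hne1 : s * t ≠ 1 := by
    intro h
    have : (s * t) a0 = a0 := by rw [h]; rfl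
    have ht : t a0 = a0 :=
      Equiv.swap_apply_of_ne_of_ne (by simp [a0, a2, Fin.ext_iff])
        (by simp [a0, a3, Fin.ext_iff])
    rw [Equiv.Perm.mul_apply, ht, Equiv.swap_apply_left] at this
    exact h01 this.symm
  have hsign : Equiv.Perm.sign (s * t) = 1 := by
    rw [map_mul, Equiv.Perm.sign_swap h01, Equiv.Perm.sign_swap h23]
    norm_num
  refine ⟨⟨s * t, Equiv.Perm.mem_alternatingGroup.mpr hsign⟩, ?_⟩
  rw [Subgroup.orderOf_mk]
  exact orderOf_eq_prime hsq hne1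

/-- Let `p ≥ 5` be a prime and `n ≥ 2p`.  If `G` is a finite group having a normal
subgroup isomorphic to the alternating group `Aₙ` whose centralizer in `G` is trivial
(equivalently, `Aₙ ⊴ G ≤ Aut(Aₙ)`), then `k_{p'}(G) ≥ p`. -/
theorem kpReg_ge_p_of_almost_simple_alternating
    (p n : ℕ) (hp : p.Prime) (hp5 : 5 ≤ p) (hn : 2 * p ≤ n)
    (G : Type*) [Group G] [Finite G] (A : Subgroup G) (hA : A.Normal)
    (hiso : Nonempty (A ≃* alternatingGroup (Fin n)))
    (hcent : Subgroup.centralizer (A : Set G) = ⊥) :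
    p ≤ kpReg p G := by
  classical
  obtain ⟨e⟩ := hiso
  have hpodd : Odd p := hp.odd_of_ne_two (by omega)
  -- the set of orders: 2 together with odd numbers 1, 3, ..., 2p-1 except p
  set S : Finset ℕ := insert 2 (((Finset.range p).image (fun k => 2 * k + 1)).erase p)
    with hS
  -- transfer elements of the alternating group into G
  have htrans : ∀ m : ℕ, (∃ y : alternatingGroup (Fin n), orderOf y = m) →
      ∃ x : G, orderOf x = m := by
    rintro m ⟨y, hy⟩
    refine ⟨((e.symm y : A) : G), ?_⟩
    rw [Subgroup.orderOf_coe, e.symm.orderOf_eq, hy]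
  have hmem : ∀ m ∈ S, ¬ p ∣ m ∧ ∃ x : G, orderOf x = m := by
    intro m hm
    rw [hS, Finset.mem_insert, Finset.mem_erase, Finset.mem_image] at hm
    rcases hm with hm2 | ⟨hmp, k, hk, hkm⟩
    · subst hm2
      constructor
      · intro hdvd
        have := Nat.le_of_dvd (by norm_num) hdvd
        omega
      · exact htrans 2 (exists_alternating_orderOf_two n (by omega))
    · rw [Finset.mem_range] at hk
      have hkm' : 2 * k + 1 = m := hkm
      constructor
      · rintro ⟨c, hc⟩
        rcases Nat.lt_or_ge c 1 with h | h
        · have hc0 : c = 0 := by omega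
          subst hc0
          simp at hc
          omega
        · rcases Nat.lt_or_ge c 2 with h2 | h2
          · have hc1 : c = 1 := by omega
            subst hc1
            rw [mul_one] at hc
            omega
          · nlinarith
      · rcases Nat.eq_zero_or_pos k with hk0 | hk0
        · refine htrans m ⟨1, ?_⟩
          rw [orderOf_one]; omega
        · refine htrans m (exists_alternating_orderOf_odd n m (by omega)
            ⟨k, by omega⟩ (by omega))
  have hcard : S.card = p := by
    have hinj : Function.Injective (fun k => 2 * k + 1) := fun a b hab => by
      have : 2 * a + 1 = 2 * b + 1 := hab
      omega
    have himg : ((Finset.range p).image (fun k => 2 * k + 1)).card = p := by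
      rw [Finset.card_image_of_injective _ hinj, Finset.card_range]
    have hpmem : p ∈ (Finset.range p).image (fun k => 2 * k + 1) := by
      rw [Finset.mem_image]
      obtain ⟨j, hj⟩ := hpodd
      exact ⟨j, Finset.mem_range.mpr (by omega), by omega⟩
    have h2notmem : (2 : ℕ) ∉ ((Finset.range p).image (fun k => 2 * k + 1)).erase p := by
      intro h
      rw [Finset.mem_erase, Finset.mem_image] at h
      obtain ⟨_, j, _, hj⟩ := h
      omega
    rw [hS, Finset.card_insert_of_notMem h2notmem, Finset.card_erase_of_mem hpmem, himg]
    omega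
  calc p = S.card := hcard.symm
    _ ≤ kpReg p G := card_le_kpReg p S hmem
end
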